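/- Let (A,[·,·],·) be a finite-dimensional Poisson algebra over a field and r ∈ A⊗A a solution of the Poisson Yang–Baxter equation whose symmetric part is (ad,L)-invariant and such that I_r = r₊ − r₋ is a linear isomorphism (i.e., r gives a factorizable Poisson bialgebra). Fix λ ≠ 0 in the base field and define P = −λ·r₊ ∘ I_r⁻¹ and 𝔅(a,b) = −λ⟨I_r⁻¹(a), b⟩. Then ((A,[·,·],·),𝔅,P) is a quadratic Rota–Baxter Poisson algebra of weight λ. -/
import Mathlib


open TensorProduct

section Preamble

variable {k A : Type*} [Field k] [AddCommGroup A] [Module k A]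

/-- The Poisson algebra axioms for a pair of bilinear operations `br` (the Lie bracket)
and `mul` (the commutative associative product), including the Leibniz compatibility. -/
structure IsPoisson {k A : Type*} [Field k] [AddCommGroup A] [Module k A]
    (br mul : A →ₗ[k] A →ₗ[k] A) : Prop where
  antisymm : ∀ a b, br a b = - br b a
  jacobi : ∀ a b c, br a (br b c) = br (br a b) c + br b (br a c)
  comm : ∀ a b, mul a b = mul b a
  assoc : ∀ a b c, mul (mul a b) c = mul a (mul b c)
  leibniz : ∀ a b c, br a (mul b c) = mul (br a b) c + mul b (br a c)

/-- `r ↦ r₊`, where `⟨r₊(x*), y*⟩ = ⟨r, x* ⊗ y*⟩`. -/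
noncomputable def rPlus : (A ⊗[k] A) →ₗ[k] Module.Dual k A →ₗ[k] A :=
  TensorProduct.lift <| LinearMap.mk₂ k
    (fun a b => (Module.Dual.eval k A a).smulRight b)
    (fun a a' b => by ext f; simp [add_smul])
    (fun c a b => by ext f; simp [smul_smul])
    (fun a b b' => by ext f; simp)
    (fun c a b => by ext f; simp [smul_smul, mul_comm])

/-- The flip `τ : A ⊗ A → A ⊗ A`. -/
noncomputable def tauT : (A ⊗[k] A) →ₗ[k] A ⊗[k] A := (TensorProduct.comm k A A).toLinearMap

/-- `r ↦ r₋`, where `⟨r₊(x*), y*⟩ = ⟨r, x* ⊗ y*⟩ = −⟨x*, r₋(y*)⟩`. -/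
noncomputable def rMinus : (A ⊗[k] A) →ₗ[k] Module.Dual k A →ₗ[k] A :=
  - (rPlus ∘ₗ tauT)

@[simp] lemma rPlus_tmul (a b : A) (f : Module.Dual k A) :
    rPlus (a ⊗ₜ[k] b) f = f a • b := rfl

@[simp] lemma dualMap_add_apply (f g : A →ₗ[k] A) (y : Module.Dual k A) :
    (f + g).dualMap y = f.dualMap y + g.dualMap y := by ext a; simp

@[simp] lemma dualMap_smul_apply (c : k) (f : A →ₗ[k] A) (y : Module.Dual k A) :
    (c • f).dualMap y = c • f.dualMap y := by ext a; simp

@[simp] lemma dualMap_neg_apply (f : A →ₗ[k] A) (y : Module.Dual k A) :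
    (-f).dualMap y = - f.dualMap y := by ext a; simp

noncomputable def T1213 (m : A →ₗ[k] A →ₗ[k] A) :
    (A ⊗[k] A) ⊗[k] (A ⊗[k] A) →ₗ[k] A ⊗[k] (A ⊗[k] A) :=
  (TensorProduct.map (TensorProduct.lift m) LinearMap.id) ∘ₗ
    (TensorProduct.tensorTensorTensorComm k A A A A).toLinearMap

noncomputable def T1323 (m : A →ₗ[k] A →ₗ[k] A) :
    (A ⊗[k] A) ⊗[k] (A ⊗[k] A) →ₗ[k] A ⊗[k] (A ⊗[k] A) :=
  (TensorProduct.assoc k A A A).toLinearMap ∘ₗ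
    (TensorProduct.map LinearMap.id (TensorProduct.lift m)) ∘ₗ
    (TensorProduct.tensorTensorTensorComm k A A A A).toLinearMap

noncomputable def T2312 (m : A →ₗ[k] A →ₗ[k] A) :
    (A ⊗[k] A) ⊗[k] (A ⊗[k] A) →ₗ[k] A ⊗[k] (A ⊗[k] A) :=
  (TensorProduct.leftComm k A A A).toLinearMap ∘ₗ
    (TensorProduct.map (TensorProduct.lift m ∘ₗ (TensorProduct.comm k A A).toLinearMap)
      LinearMap.id) ∘ₗ
    (TensorProduct.tensorTensorTensorComm k A A A A).toLinearMap ∘ₗ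
    (TensorProduct.map (TensorProduct.comm k A A).toLinearMap LinearMap.id)

noncomputable def T1223 (m : A →ₗ[k] A →ₗ[k] A) :
    (A ⊗[k] A) ⊗[k] (A ⊗[k] A) →ₗ[k] A ⊗[k] (A ⊗[k] A) :=
  (TensorProduct.leftComm k A A A).toLinearMap ∘ₗ
    (TensorProduct.map (TensorProduct.lift m) LinearMap.id) ∘ₗ
    (TensorProduct.tensorTensorTensorComm k A A A A).toLinearMap ∘ₗ
    (TensorProduct.map (TensorProduct.comm k A A).toLinearMap LinearMap.id)

/-- `C(r) = [r₁₂,r₁₃] + [r₁₃,r₂₃] + [r₁₂,r₂₃]` for the bracket `br`. -/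
noncomputable def cybe (br : A →ₗ[k] A →ₗ[k] A) (r : A ⊗[k] A) : A ⊗[k] (A ⊗[k] A) :=
  T1213 br (r ⊗ₜ[k] r) + T1323 br (r ⊗ₜ[k] r) + T1223 br (r ⊗ₜ[k] r)

/-- `A(r) = r₁₂·r₁₃ + r₁₃·r₂₃ − r₂₃·r₁₂` for the product `mul`. -/
noncomputable def aybe (mul : A →ₗ[k] A →ₗ[k] A) (r : A ⊗[k] A) : A ⊗[k] (A ⊗[k] A) :=
  T1213 mul (r ⊗ₜ[k] r) + T1323 mul (r ⊗ₜ[k] r) - T2312 mul (r ⊗ₜ[k] r)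

/-- `r` is a solution of the Poisson Yang–Baxter equation: `C(r) = 0` and `A(r) = 0`. -/
def IsPYBESolution (br mul : A →ₗ[k] A →ₗ[k] A) (r : A ⊗[k] A) : Prop :=
  cybe br r = 0 ∧ aybe mul r = 0

variable (k A) in
/-- `σ₁₃ : a ⊗ b ⊗ c ↦ c ⊗ b ⊗ a`. -/
noncomputable def sigma13 : A ⊗[k] (A ⊗[k] A) →ₗ[k] A ⊗[k] (A ⊗[k] A) :=
  (TensorProduct.map LinearMap.id (TensorProduct.comm k A A).toLinearMap) ∘ₗ
    (TensorProduct.leftComm k A A A).toLinearMap ∘ₗ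
    (TensorProduct.map LinearMap.id (TensorProduct.comm k A A).toLinearMap)

/-- `s ∈ A ⊗ A` is `(ad, L)`-invariant:
`(ad(a)⊗id + id⊗ad(a))(s) = 0` and `(L(a)⊗id − id⊗L(a))(s) = 0` for all `a`. -/
def IsAdLInvariant (br mul : A →ₗ[k] A →ₗ[k] A) (s : A ⊗[k] A) : Prop :=
  ∀ a : A,
    TensorProduct.map (br a) LinearMap.id s + TensorProduct.map LinearMap.id (br a) s = 0 ∧
    TensorProduct.map (mul a) LinearMap.id s - TensorProduct.map LinearMap.id (mul a) s = 0

/-- The bracket `[x*,y*]_r = −ad*(r₊(x*))y* + ad*(r₋(y*))x*` on the dual space. -/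
noncomputable def dualBr (br : A →ₗ[k] A →ₗ[k] A) (r : A ⊗[k] A) :
    Module.Dual k A →ₗ[k] Module.Dual k A →ₗ[k] Module.Dual k A :=
  LinearMap.mk₂ k
    (fun x y => - (br (rPlus r x)).dualMap y + (br (rMinus r y)).dualMap x)
    (fun x x' y => by simp [map_add]; try abel)
    (fun c x y => by simp [map_smul, smul_add]; try abel)
    (fun x y y' => by simp [map_add]; try abel)
    (fun c x y => by simp [map_smul, smul_add]; try abel)

/-- The product `x*·_r y* = L*(r₊(x*))y* + L*(r₋(y*))x*` on the dual space. -/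
noncomputable def dualMul (mul : A →ₗ[k] A →ₗ[k] A) (r : A ⊗[k] A) :
    Module.Dual k A →ₗ[k] Module.Dual k A →ₗ[k] Module.Dual k A :=
  LinearMap.mk₂ k
    (fun x y => (mul (rPlus r x)).dualMap y + (mul (rMinus r y)).dualMap x)
    (fun x x' y => by simp [map_add]; try abel)
    (fun c x y => by simp [map_smul, smul_add]; try abel)
    (fun x y y' => by simp [map_add]; try abel)
    (fun c x y => by simp [map_smul, smul_add]; try abel)

/-- The descendent operation `a ∘_P b = (P a) ∘ b + a ∘ (P b) + λ a ∘ b`. -/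
noncomputable def descOp (m : A →ₗ[k] A →ₗ[k] A) (lam : k) (P : A →ₗ[k] A) :
    A →ₗ[k] A →ₗ[k] A :=
  LinearMap.mk₂ k
    (fun a b => m (P a) b + m a (P b) + lam • m a b)
    (fun a a' b => by simp [map_add, smul_add]; try abel)
    (fun c a b => by simp [map_smul, smul_add, smul_smul, mul_comm]; try abel)
    (fun a b b' => by simp [map_add, smul_add]; try abel)
    (fun c a b => by simp [map_smul, smul_add, smul_smul, mul_comm]; try abel)

/-- `P` is a Rota–Baxter operator of weight `λ` on the Poisson algebra `(A, br, mul)`. -/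
def IsRotaBaxter (br mul : A →ₗ[k] A →ₗ[k] A) (lam : k) (P : A →ₗ[k] A) : Prop :=
  (∀ a b, br (P a) (P b) = P (br (P a) b + br a (P b) + lam • br a b)) ∧
  (∀ a b, mul (P a) (P b) = P (mul (P a) b + mul a (P b) + lam • mul a b))

/-- `((A, br, mul), B, P)` is a quadratic Rota–Baxter Poisson algebra of weight `λ`. -/
structure IsQuadraticRotaBaxter {k A : Type*} [Field k] [AddCommGroup A] [Module k A]
    (br mul : A →ₗ[k] A →ₗ[k] A) (B : A →ₗ[k] A →ₗ[k] k) (lam : k) (P : A →ₗ[k] A) :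
    Prop where
  poisson : IsPoisson br mul
  symm : ∀ a b, B a b = B b a
  nondeg : ∀ a, (∀ b, B a b = 0) → a = 0
  br_invariant : ∀ a b c, B (br a b) c = B a (br b c)
  mul_invariant : ∀ a b c, B (mul a b) c = B a (mul b c)
  rb : IsRotaBaxter br mul lam P
  compat : ∀ a b, B a (P b) + B (P a) b + lam • B a b = 0

/-- The semidirect-product bracket on `A ⊕ A*`:
`[(a,x*),(b,y*)] = ([a,b], −ad*(a)y* + ad*(b)x*)`. -/
noncomputable def sdBr (br : A →ₗ[k] A →ₗ[k] A) :
    (A × Module.Dual k A) →ₗ[k] (A × Module.Dual k A) →ₗ[k] (A × Module.Dual k A) :=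
  LinearMap.mk₂ k
    (fun p q => (br p.1 q.1, - (br p.1).dualMap q.2 + (br q.1).dualMap p.2))
    (fun p p' q => by simp [Prod.ext_iff, map_add]; try abel)
    (fun c p q => by simp [Prod.ext_iff, map_smul, smul_add]; try abel)
    (fun p q q' => by simp [Prod.ext_iff, map_add]; try abel)
    (fun c p q => by simp [Prod.ext_iff, map_smul, smul_add]; try abel)

/-- The semidirect-product multiplication on `A ⊕ A*`:
`(a,x*)·(b,y*) = (a·b, L*(a)y* + L*(b)x*)`. -/
noncomputable def sdMul (mul : A →ₗ[k] A →ₗ[k] A) :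
    (A × Module.Dual k A) →ₗ[k] (A × Module.Dual k A) →ₗ[k] (A × Module.Dual k A) :=
  LinearMap.mk₂ k
    (fun p q => (mul p.1 q.1, (mul p.1).dualMap q.2 + (mul q.1).dualMap p.2))
    (fun p p' q => by simp [Prod.ext_iff, map_add]; try abel)
    (fun c p q => by simp [Prod.ext_iff, map_smul, smul_add]; try abel)
    (fun p q q' => by simp [Prod.ext_iff, map_add]; try abel)
    (fun c p q => by simp [Prod.ext_iff, map_smul, smul_add]; try abel)

/-- The canonical bilinear form `𝔅_d((a,x*),(b,y*)) = ⟨a,y*⟩ + ⟨b,x*⟩` on `A ⊕ A*`. -/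
noncomputable def sdForm :
    (A × Module.Dual k A) →ₗ[k] (A × Module.Dual k A) →ₗ[k] k :=
  LinearMap.mk₂ k
    (fun p q => q.2 p.1 + p.2 q.1)
    (fun p p' q => by simp; try ring)
    (fun c p q => by simp [smul_add, smul_smul]; try ring)
    (fun p q q' => by simp; try ring)
    (fun c p q => by simp [smul_add, smul_smul]; try ring)

end Preamble

section Aux

variable {k A : Type*} [Field k] [AddCommGroup A] [Module k A]

@[simp] lemma tauT_tmul (a b : A) : tauT (a ⊗ₜ[k] b) = b ⊗ₜ[k] a := rfl

@[simp] lemma rMinus_tmul (a b : A) (f : Module.Dual k A) :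
    rMinus (a ⊗ₜ[k] b) f = -(f b • a) := rfl

@[simp] lemma dualMap_zero_apply (y : Module.Dual k A) :
    (0 : A →ₗ[k] A).dualMap y = 0 := by ext a; simp

lemma tauT_tauT (t : A ⊗[k] A) : tauT (tauT t) = t := by
  induction t using TensorProduct.induction_on with
  | zero => simp
  | tmul a b => simp
  | add s t hs ht => simp [map_add, hs, ht]

lemma aux_pairing (t : A ⊗[k] A) (x y : Module.Dual k A) :
    y (rPlus t x) = x (rPlus (tauT t) y) := by
  induction t using TensorProduct.induction_on with
  | zero => simp
  | tmul a b => simp [mul_comm]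
  | add s t hs ht => simp [map_add, LinearMap.add_apply, hs, ht]

lemma rPlus_map_left (f : A →ₗ[k] A) (t : A ⊗[k] A) (x : Module.Dual k A) :
    rPlus (TensorProduct.map f LinearMap.id t) x = rPlus t (f.dualMap x) := by
  induction t using TensorProduct.induction_on with
  | zero => simp
  | tmul a b => simp
  | add s t hs ht => simp [map_add, LinearMap.add_apply, hs, ht]

lemma rPlus_map_right (g : A →ₗ[k] A) (t : A ⊗[k] A) (x : Module.Dual k A) :
    rPlus (TensorProduct.map LinearMap.id g t) x = g (rPlus t x) := by
  induction t using TensorProduct.induction_on with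
  | zero => simp
  | tmul a b => simp
  | add s t hs ht => simp [map_add, LinearMap.add_apply, hs, ht]

/-- Contraction of the first two tensor legs with `x`, `y`. -/
noncomputable def ctr12 (x y : Module.Dual k A) : A ⊗[k] (A ⊗[k] A) →ₗ[k] A :=
  TensorProduct.lift (x.smulRight (rPlus.flip y))

/-- Contraction of the last two tensor legs with `y`, `z`. -/
noncomputable def ctr23 (y z : Module.Dual k A) : A ⊗[k] (A ⊗[k] A) →ₗ[k] A :=
  TensorProduct.lift
      ((TensorProduct.lift (y.smulRight z)).smulRight LinearMap.id) ∘ₗ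
    (TensorProduct.comm k A (A ⊗[k] A)).toLinearMap

@[simp] lemma ctr12_tmul (x y : Module.Dual k A) (a b c : A) :
    ctr12 x y (a ⊗ₜ[k] (b ⊗ₜ[k] c)) = x a • y b • c := rfl

@[simp] lemma ctr23_tmul (y z : Module.Dual k A) (a b c : A) :
    ctr23 y z (a ⊗ₜ[k] (b ⊗ₜ[k] c)) = (y b * z c) • a := by
  simp [ctr23, smul_smul]

@[simp] lemma T1213_tmul (m : A →ₗ[k] A →ₗ[k] A) (a b c d : A) :
    T1213 m ((a ⊗ₜ[k] b) ⊗ₜ[k] (c ⊗ₜ[k] d)) = (m a c) ⊗ₜ[k] (b ⊗ₜ[k] d) := by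
  simp [T1213]

@[simp] lemma T1323_tmul (m : A →ₗ[k] A →ₗ[k] A) (a b c d : A) :
    T1323 m ((a ⊗ₜ[k] b) ⊗ₜ[k] (c ⊗ₜ[k] d)) = a ⊗ₜ[k] (c ⊗ₜ[k] (m b d)) := by
  simp [T1323]

@[simp] lemma T1223_tmul (m : A →ₗ[k] A →ₗ[k] A) (a b c d : A) :
    T1223 m ((a ⊗ₜ[k] b) ⊗ₜ[k] (c ⊗ₜ[k] d)) = a ⊗ₜ[k] ((m b c) ⊗ₜ[k] d) := by
  simp [T1223]

@[simp] lemma T2312_tmul (m : A →ₗ[k] A →ₗ[k] A) (a b c d : A) :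
    T2312 m ((a ⊗ₜ[k] b) ⊗ₜ[k] (c ⊗ₜ[k] d)) = a ⊗ₜ[k] ((m c b) ⊗ₜ[k] d) := by
  simp [T2312]

lemma ctr12_T1213 (m : A →ₗ[k] A →ₗ[k] A) (x y : Module.Dual k A) (r1 r2 : A ⊗[k] A) :
    ctr12 x y (T1213 m (r1 ⊗ₜ[k] r2)) = - rPlus r2 ((m (rMinus r1 y)).dualMap x) := by
  induction r1 using TensorProduct.induction_on with
  | zero => simp [zero_tmul]
  | tmul a b =>
    induction r2 using TensorProduct.induction_on with
    | zero => simp [tmul_zero]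
    | tmul c d => simp [smul_smul, mul_comm]
    | add s t hs ht =>
      simp only [tmul_add, map_add, LinearMap.add_apply, hs, ht] <;> abel
  | add s t hs ht =>
    simp only [add_tmul, map_add, LinearMap.add_apply, dualMap_add_apply, hs, ht] <;> abel

lemma ctr12_T1323 (m : A →ₗ[k] A →ₗ[k] A) (x y : Module.Dual k A) (r1 r2 : A ⊗[k] A) :
    ctr12 x y (T1323 m (r1 ⊗ₜ[k] r2)) = m (rPlus r1 x) (rPlus r2 y) := by
  induction r1 using TensorProduct.induction_on with
  | zero => simp [zero_tmul]
  | tmul a b =>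
    induction r2 using TensorProduct.induction_on with
    | zero => simp [tmul_zero]
    | tmul c d => simp [smul_smul, mul_comm]
    | add s t hs ht =>
      simp only [tmul_add, map_add, LinearMap.add_apply, hs, ht] <;> abel
  | add s t hs ht =>
    simp only [add_tmul, map_add, LinearMap.add_apply, hs, ht] <;> abel

lemma ctr12_T1223 (m : A →ₗ[k] A →ₗ[k] A) (x y : Module.Dual k A) (r1 r2 : A ⊗[k] A) :
    ctr12 x y (T1223 m (r1 ⊗ₜ[k] r2)) = rPlus r2 ((m (rPlus r1 x)).dualMap y) := by
  induction r1 using TensorProduct.induction_on with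
  | zero => simp [zero_tmul]
  | tmul a b =>
    induction r2 using TensorProduct.induction_on with
    | zero => simp [tmul_zero]
    | tmul c d => simp [smul_smul, mul_comm]
    | add s t hs ht =>
      simp only [tmul_add, map_add, LinearMap.add_apply, hs, ht] <;> abel
  | add s t hs ht =>
    simp only [add_tmul, map_add, LinearMap.add_apply, dualMap_add_apply, hs, ht] <;> abel

lemma ctr12_T2312 (m : A →ₗ[k] A →ₗ[k] A) (x y : Module.Dual k A) (r1 r2 : A ⊗[k] A) :
    ctr12 x y (T2312 m (r1 ⊗ₜ[k] r2)) = rPlus r2 ((m.flip (rPlus r1 x)).dualMap y) := by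
  induction r1 using TensorProduct.induction_on with
  | zero => simp [zero_tmul]
  | tmul a b =>
    induction r2 using TensorProduct.induction_on with
    | zero => simp [tmul_zero]
    | tmul c d => simp [smul_smul, mul_comm]
    | add s t hs ht =>
      simp only [tmul_add, map_add, LinearMap.add_apply, hs, ht] <;> abel
  | add s t hs ht =>
    simp only [add_tmul, map_add, LinearMap.add_apply, dualMap_add_apply, hs, ht] <;> abel

lemma ctr23_T1213 (m : A →ₗ[k] A →ₗ[k] A) (y z : Module.Dual k A) (r1 r2 : A ⊗[k] A) :
    ctr23 y z (T1213 m (r1 ⊗ₜ[k] r2)) = m (rMinus r1 y) (rMinus r2 z) := by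
  induction r1 using TensorProduct.induction_on with
  | zero => simp [zero_tmul]
  | tmul a b =>
    induction r2 using TensorProduct.induction_on with
    | zero => simp [tmul_zero]
    | tmul c d => simp [smul_smul, mul_comm]
    | add s t hs ht =>
      simp only [tmul_add, map_add, LinearMap.add_apply, hs, ht] <;> abel
  | add s t hs ht =>
    simp only [add_tmul, map_add, LinearMap.add_apply, hs, ht] <;> abel

lemma ctr23_T1323 (m : A →ₗ[k] A →ₗ[k] A) (y z : Module.Dual k A) (r1 r2 : A ⊗[k] A) :
    ctr23 y z (T1323 m (r1 ⊗ₜ[k] r2)) = - rMinus r1 ((m.flip (rPlus r2 y)).dualMap z) := by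
  induction r1 using TensorProduct.induction_on with
  | zero => simp [zero_tmul]
  | tmul a b =>
    induction r2 using TensorProduct.induction_on with
    | zero => simp [tmul_zero]
    | tmul c d => simp [smul_smul, mul_comm]
    | add s t hs ht =>
      simp only [tmul_add, map_add, LinearMap.add_apply, dualMap_add_apply, hs, ht] <;> abel
  | add s t hs ht =>
    simp only [add_tmul, map_add, LinearMap.add_apply, hs, ht] <;> abel

lemma ctr23_T1223 (m : A →ₗ[k] A →ₗ[k] A) (y z : Module.Dual k A) (r1 r2 : A ⊗[k] A) :
    ctr23 y z (T1223 m (r1 ⊗ₜ[k] r2)) = rMinus r1 ((m.flip (rMinus r2 z)).dualMap y) := by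
  induction r1 using TensorProduct.induction_on with
  | zero => simp [zero_tmul]
  | tmul a b =>
    induction r2 using TensorProduct.induction_on with
    | zero => simp [tmul_zero]
    | tmul c d => simp [smul_smul, mul_comm]
    | add s t hs ht =>
      simp only [tmul_add, map_add, LinearMap.add_apply, dualMap_add_apply, hs, ht] <;> abel
  | add s t hs ht =>
    simp only [add_tmul, map_add, LinearMap.add_apply, hs, ht] <;> abel

lemma ctr23_T2312 (m : A →ₗ[k] A →ₗ[k] A) (y z : Module.Dual k A) (r1 r2 : A ⊗[k] A) :
    ctr23 y z (T2312 m (r1 ⊗ₜ[k] r2)) = rMinus r1 ((m (rMinus r2 z)).dualMap y) := by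
  induction r1 using TensorProduct.induction_on with
  | zero => simp [zero_tmul]
  | tmul a b =>
    induction r2 using TensorProduct.induction_on with
    | zero => simp [tmul_zero]
    | tmul c d => simp [smul_smul, mul_comm]
    | add s t hs ht =>
      simp only [tmul_add, map_add, LinearMap.add_apply, dualMap_add_apply, hs, ht] <;> abel
  | add s t hs ht =>
    simp only [add_tmul, map_add, LinearMap.add_apply, hs, ht] <;> abel

end Aux

set_option maxHeartbeats 2000000 in
/-- a factorizable Poisson bialgebra gives rise to a quadratic Rota–Baxter
Poisson algebra of weight `λ ≠ 0`, with `P = −λ·r₊ ∘ I_r⁻¹` and `𝔅(a,b) = −λ⟨I_r⁻¹(a),b⟩`. -/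
theorem statement15 {k A : Type*} [Field k] [AddCommGroup A] [Module k A]
    [FiniteDimensional k A]
    (br mul : A →ₗ[k] A →ₗ[k] A) (hP : IsPoisson br mul)
    (r S Lam : A ⊗[k] A) (hdec : r = S + Lam) (hS : tauT S = S) (hLam : tauT Lam = - Lam)
    (hr : IsPYBESolution br mul r) (hinv : IsAdLInvariant br mul S)
    (Ir : Module.Dual k A ≃ₗ[k] A) (hIr : ∀ x, Ir x = rPlus r x - rMinus r x)
    (lam : k) (hlam : lam ≠ 0) :
    IsQuadraticRotaBaxter br mul
      ((-lam) • (Ir.symm.toLinearMap : A →ₗ[k] Module.Dual k A)) lam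
      ((-lam) • ((rPlus r) ∘ₗ Ir.symm.toLinearMap)) := by
  have hIr' : ∀ x, Ir x = rPlus r x + rPlus (tauT r) x := by
    intro x; rw [hIr]
    simp [rMinus, sub_neg_eq_add]
  have hpair : ∀ x y : Module.Dual k A, y (Ir x) = x (Ir y) := by
    intro x y
    rw [hIr' x, hIr' y, map_add, map_add, aux_pairing r x y,
      aux_pairing (tauT r) x y, tauT_tauT]
    ring
  have hsymB : ∀ a b : A, (Ir.symm a) b = (Ir.symm b) a := by
    intro a b
    conv_lhs => rw [← Ir.apply_symm_apply b]
    rw [hpair (Ir.symm b) (Ir.symm a), Ir.apply_symm_apply]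
  have hS2 : ∀ x, Ir x = rPlus S x + rPlus S x := by
    intro x
    have ht : tauT r = S - Lam := by rw [hdec, map_add, hS, hLam, sub_eq_add_neg]
    rw [hIr' x, ht, hdec, map_add, map_sub, LinearMap.add_apply, LinearMap.sub_apply]
    abel
  have hbrI : ∀ a x, br a (Ir x) = - Ir ((br a).dualMap x) := by
    intro a x
    have h0 := (hinv a).1
    have h1 : rPlus S ((br a).dualMap x) + br a (rPlus S x) = 0 := by
      have h2 := congrArg (fun t => rPlus t x) h0
      simpa [map_add, LinearMap.add_apply, rPlus_map_left, rPlus_map_right] using h2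
    have h3 : br a (rPlus S x) = - rPlus S ((br a).dualMap x) :=
      eq_neg_of_add_eq_zero_right h1
    rw [hS2 x, hS2 ((br a).dualMap x), map_add, h3]
    abel
  have hmulI : ∀ a x, mul a (Ir x) = Ir ((mul a).dualMap x) := by
    intro a x
    have h0 := (hinv a).2
    have h1 : rPlus S ((mul a).dualMap x) - mul a (rPlus S x) = 0 := by
      have h2 := congrArg (fun t => rPlus t x) h0
      simpa [map_sub, LinearMap.sub_apply, rPlus_map_left, rPlus_map_right] using h2
    have h3 : mul a (rPlus S x) = rPlus S ((mul a).dualMap x) := (sub_eq_zero.mp h1).symm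
    rw [hS2 x, hS2 ((mul a).dualMap x), map_add, h3]
  have hIsb : ∀ a b, Ir.symm (br a b) = -((br a).dualMap (Ir.symm b)) := by
    intro a b
    have h := hbrI a (Ir.symm b)
    rw [Ir.apply_symm_apply] at h
    rw [h, map_neg, Ir.symm_apply_apply]
  have hIsm : ∀ a b, Ir.symm (mul a b) = (mul a).dualMap (Ir.symm b) := by
    intro a b
    have h := hmulI a (Ir.symm b)
    rw [Ir.apply_symm_apply] at h
    rw [h, Ir.symm_apply_apply]
  have hbf : br.flip = -br := by
    ext u v
    simp [hP.antisymm v u]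
  have hmf : mul.flip = mul := by
    ext u v
    simp [hP.comm v u]
  have hplusbr : ∀ x y, br (rPlus r x) (rPlus r y) = rPlus r (dualBr br r x y) := by
    intro x y
    have h := congrArg (ctr12 x y) hr.1
    simp only [cybe, map_add, map_zero, ctr12_T1213, ctr12_T1323, ctr12_T1223] at h
    have hw : rPlus r (dualBr br r x y)
        = - rPlus r ((br (rPlus r x)).dualMap y) + rPlus r ((br (rMinus r y)).dualMap x) := by
      simp [dualBr, map_add, map_neg]
    rw [hw, ← sub_eq_zero, ← h]
    abel
  have hminusbr : ∀ x y, br (rMinus r x) (rMinus r y) = rMinus r (dualBr br r x y) := by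
    intro x y
    have h := congrArg (ctr23 x y) hr.1
    simp only [cybe, map_add, map_zero, ctr23_T1213, ctr23_T1323, ctr23_T1223, hbf,
      LinearMap.neg_apply, dualMap_neg_apply, map_neg, neg_neg] at h
    have hw : rMinus r (dualBr br r x y)
        = - rMinus r ((br (rPlus r x)).dualMap y) + rMinus r ((br (rMinus r y)).dualMap x) := by
      simp [dualBr, map_add, map_neg]
    rw [hw, ← sub_eq_zero, ← h]
    abel
  have hplusmul : ∀ x y, mul (rPlus r x) (rPlus r y) = rPlus r (dualMul mul r x y) := by
    intro x y
    have h := congrArg (ctr12 x y) hr.2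
    simp only [aybe, map_add, map_sub, map_zero, ctr12_T1213, ctr12_T1323, ctr12_T2312,
      hmf] at h
    have hw : rPlus r (dualMul mul r x y)
        = rPlus r ((mul (rPlus r x)).dualMap y) + rPlus r ((mul (rMinus r y)).dualMap x) := by
      simp [dualMul, map_add]
    rw [hw, ← sub_eq_zero, ← h]
    abel
  have hminusmul : ∀ x y, mul (rMinus r x) (rMinus r y) = rMinus r (dualMul mul r x y) := by
    intro x y
    have h := congrArg (ctr23 x y) hr.2
    simp only [aybe, map_add, map_sub, map_zero, ctr23_T1213, ctr23_T1323, ctr23_T2312,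
      hmf] at h
    have hw : rMinus r (dualMul mul r x y)
        = rMinus r ((mul (rPlus r x)).dualMap y) + rMinus r ((mul (rMinus r y)).dualMap x) := by
      simp [dualMul, map_add]
    rw [hw, ← sub_eq_zero, ← h]
    abel
  refine ⟨hP, ?_, ?_, ?_, ?_, ⟨?_, ?_⟩, ?_⟩
  · -- symm
    intro a b
    simp only [LinearMap.smul_apply, LinearEquiv.coe_coe, smul_eq_mul]
    rw [hsymB a b]
  · -- nondeg
    intro a ha
    have h1 : ∀ b, (Ir.symm a) b = 0 := by
      intro b
      have := ha b
      simp only [LinearMap.smul_apply, LinearEquiv.coe_coe, smul_eq_mul] at this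
      rcases mul_eq_zero.mp this with h | h
      · exact absurd (neg_eq_zero.mp h) hlam
      · exact h
    have h2 : Ir.symm a = 0 := LinearMap.ext h1
    simpa using congrArg Ir h2
  · -- br invariant
    intro a b c
    simp only [LinearMap.smul_apply, LinearEquiv.coe_coe, smul_eq_mul]
    congr 1
    rw [hsymB (br a b) c, hsymB a (br b c), hIsb b c]
    simp only [LinearMap.neg_apply, LinearMap.dualMap_apply]
    rw [hP.antisymm b a, map_neg, neg_neg]
  · -- mul invariant
    intro a b c
    simp only [LinearMap.smul_apply, LinearEquiv.coe_coe, smul_eq_mul]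
    congr 1
    rw [hsymB (mul a b) c, hsymB a (mul b c), hIsm b c]
    simp only [LinearMap.dualMap_apply]
    rw [hP.comm b a]
  · -- rb bracket
    intro a b
    set x := Ir.symm a with hxdef
    set y := Ir.symm b with hydef
    have hax : a = rPlus r x - rMinus r x := by rw [hxdef, ← hIr, Ir.apply_symm_apply]
    have hby : b = rPlus r y - rMinus r y := by rw [hydef, ← hIr, Ir.apply_symm_apply]
    simp only [LinearMap.smul_apply, LinearMap.comp_apply, LinearEquiv.coe_coe,
      ← hxdef, ← hydef]
    have hE : br ((-lam) • rPlus r x) b + br a ((-lam) • rPlus r y) + lam • br a b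
        = (-lam) • Ir (dualBr br r x y) := by
      rw [hIr (dualBr br r x y), ← hplusbr x y, ← hminusbr x y, hax, hby]
      simp only [map_sub, map_smul, LinearMap.sub_apply, LinearMap.smul_apply,
        smul_sub, LinearMap.map_smul₂]
      module
    rw [hE]
    simp only [map_smul, LinearMap.smul_apply, Ir.symm_apply_apply, smul_smul]
    rw [hplusbr x y]
  · -- rb mul
    intro a b
    set x := Ir.symm a with hxdef
    set y := Ir.symm b with hydef
    have hax : a = rPlus r x - rMinus r x := by rw [hxdef, ← hIr, Ir.apply_symm_apply]
    have hby : b = rPlus r y - rMinus r y := by rw [hydef, ← hIr, Ir.apply_symm_apply]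
    simp only [LinearMap.smul_apply, LinearMap.comp_apply, LinearEquiv.coe_coe,
      ← hxdef, ← hydef]
    have hE : mul ((-lam) • rPlus r x) b + mul a ((-lam) • rPlus r y) + lam • mul a b
        = (-lam) • Ir (dualMul mul r x y) := by
      rw [hIr (dualMul mul r x y), ← hplusmul x y, ← hminusmul x y, hax, hby]
      simp only [map_sub, map_smul, LinearMap.sub_apply, LinearMap.smul_apply,
        smul_sub, LinearMap.map_smul₂]
      module
    rw [hE]
    simp only [map_smul, LinearMap.smul_apply, Ir.symm_apply_apply, smul_smul]
    rw [hplusmul x y]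
  · -- compat
    intro a b
    have h1 : (Ir.symm a) b
        = (Ir.symm a) (rPlus r (Ir.symm b)) + (Ir.symm b) (rPlus r (Ir.symm a)) := by
      conv_lhs => rw [← Ir.apply_symm_apply b]
      rw [hIr' (Ir.symm b), map_add, aux_pairing (tauT r) (Ir.symm b) (Ir.symm a), tauT_tauT]
    simp only [LinearMap.smul_apply, LinearMap.comp_apply, LinearEquiv.coe_coe, map_smul,
      smul_eq_mul]
    rw [hsymB (rPlus r (Ir.symm a)) b, h1]
    ring
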